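/- Assume χ C_m + τ c_l ≥ c > 0 for all l = 1,…,N_h, where c_l = ∂I_ion/∂v_l(v^{k-1}). Then the Jacobian bilinear form a(s,φ) = χC_m ⟨s_i − s_e, φ_i − φ_e⟩ + τ a_i(s_i, φ_i) + τ a_e(s_e, φ_e) + τ ⟨Σ_l c_l (s_{i,l} − s_{e,l}) ψ_l, φ_i − φ_e⟩ is coercive with respect to the norm ‖u‖_τ² = (1+τ)‖u_i − u_e‖_{L²(Ω)}² + τ a_i(u_i,u_i) + τ a_e(u_e,u_e): there exists a constant α > 0 such that a(s,s) ≥ α ‖s‖_τ² for all s = (s_i, s_e) ∈ V_h × V_h. -/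

import Mathlib

open Matrix

lemma diag_quad {N : ℕ} {M : Matrix (Fin N) (Fin N) ℝ} (hMdiag : M.IsDiag)
    (v w : Fin N → ℝ) : v ⬝ᵥ M *ᵥ w = ∑ l, v l * (M l l * w l) := by
  unfold dotProduct mulVec
  refine Finset.sum_congr rfl fun l _ => ?_
  congr 1
  unfold dotProduct
  rw [Finset.sum_eq_single l]
  · intro j _ hj; simp [hMdiag (Ne.symm hj)]
  · simp

/-- Coercivity of the Jacobian bilinear form with respect to the ‖·‖_τ norm. -/
theorem jacobian_form_coercive (N : ℕ) (χ Cm τ c : ℝ)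
    (hχ : 0 < χ) (hCm : 0 < Cm) (hτ : 0 < τ) (hc : 0 < c)
    (M Ai Ae : Matrix (Fin N) (Fin N) ℝ)
    (hM : M.PosDef) (hMdiag : M.IsDiag)
    (hAi : Ai.PosSemidef) (hAe : Ae.PosSemidef)
    (cl : Fin N → ℝ) (hcl : ∀ l, χ * Cm + τ * cl l ≥ c) :
    ∃ α > 0, ∀ si se : Fin N → ℝ,
      χ * Cm * ((si - se) ⬝ᵥ M *ᵥ (si - se))
        + τ * (si ⬝ᵥ Ai *ᵥ si) + τ * (se ⬝ᵥ Ae *ᵥ se)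
        + τ * ((fun l => cl l * (si - se) l) ⬝ᵥ M *ᵥ (si - se))
      ≥ α * ((1 + τ) * ((si - se) ⬝ᵥ M *ᵥ (si - se))
        + τ * (si ⬝ᵥ Ai *ᵥ si) + τ * (se ⬝ᵥ Ae *ᵥ se)) := by
  have hMll : ∀ l, 0 ≤ M l l := by
    intro l
    have h := hM.posSemidef.dotProduct_mulVec_nonneg (Pi.single l 1)
    have := diag_quad hMdiag (Pi.single l 1) (Pi.single l 1)
    simp only [star_trivial] at h
    rw [this] at h
    simpa [Pi.single_apply, Finset.sum_eq_single l] using h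
  refine ⟨min (c / (1 + τ)) 1, lt_min (div_pos hc (by linarith)) one_pos, fun si se => ?_⟩
  set d := si - se with hd
  have hAi' : 0 ≤ si ⬝ᵥ Ai *ᵥ si := by simpa using hAi.dotProduct_mulVec_nonneg si
  have hAe' : 0 ≤ se ⬝ᵥ Ae *ᵥ se := by simpa using hAe.dotProduct_mulVec_nonneg se
  have hMq : 0 ≤ d ⬝ᵥ M *ᵥ d := by simpa using hM.posSemidef.dotProduct_mulVec_nonneg d
  have key : χ * Cm * (d ⬝ᵥ M *ᵥ d) + τ * ((fun l => cl l * d l) ⬝ᵥ M *ᵥ d)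
      ≥ c * (d ⬝ᵥ M *ᵥ d) := by
    rw [diag_quad hMdiag, diag_quad hMdiag, Finset.mul_sum, Finset.mul_sum, Finset.mul_sum,
      ← Finset.sum_add_distrib]
    refine Finset.sum_le_sum fun l _ => ?_
    have h1 : 0 ≤ M l l * d l ^ 2 := mul_nonneg (hMll l) (sq_nonneg _)
    have := hcl l
    nlinarith [mul_le_mul_of_nonneg_right (hcl l) h1]
  have hα1 : min (c / (1 + τ)) 1 * (1 + τ) ≤ c := by
    have : c / (1 + τ) * (1 + τ) = c := div_mul_cancel₀ c (by linarith)
    nlinarith [min_le_left (c / (1 + τ)) 1]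
  have hα2 : min (c / (1 + τ)) 1 ≤ 1 := min_le_right _ _
  have hα0 : 0 < min (c / (1 + τ)) 1 := lt_min (div_pos hc (by linarith)) one_pos
  nlinarith [mul_le_mul_of_nonneg_right hα1 hMq, mul_le_mul_of_nonneg_right hα2 hAi',
    mul_le_mul_of_nonneg_right hα2 hAe', mul_le_mul_of_nonneg_left hAi' hτ.le,
    mul_le_mul_of_nonneg_left hAe' hτ.le]
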